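/- Let Γ ⊆ ℕ × ℤ^d be a finitely generated, saturated monoid such that the real cone generated by Γ is full-dimensional and its intersection with {1} × ℝ^d is bounded. Then the set Δ := {x ∈ ℝ^d : (1, x) ∈ closure(cone(Γ))} is a rational convex polytope whose lattice points are exactly {x ∈ ℤ^d : (1, x) ∈ Γ}. -/

import Mathlib

open scoped BigOperators

noncomputable section

/-- The embedding `ℕ × ℤ^d → ℝ × ℝ^d`. -/
def iota (d : ℕ) : ℕ × (Fin d → ℤ) → ℝ × (Fin d → ℝ) :=
  fun p => ((p.1 : ℝ), fun i => (p.2 i : ℝ))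

/-- The convex cone spanned by a set: all nonnegative multiples of points of the convex
hull. -/
def coneOf {d : ℕ} (S : Set (ℝ × (Fin d → ℝ))) : Set (ℝ × (Fin d → ℝ)) :=
  {z | ∃ c : ℝ, 0 ≤ c ∧ ∃ y ∈ convexHull ℝ S, z = c • y}


/-- One step: reduce support of a nonneg conical combination using a dependence relation
with a positive coefficient. -/
lemma cone_reduce {E : Type*} [AddCommGroup E] [Module ℝ E] [DecidableEq E]
    (S : Finset E) (c g : E → ℝ) (hc : ∀ s ∈ S, 0 ≤ c s)
    (hg : ∑ s ∈ S, g s • s = 0) (hpos : ∃ s ∈ S, 0 < g s) :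
    ∃ s₀ ∈ S, ∃ c' : E → ℝ, (∀ s ∈ S, 0 ≤ c' s) ∧ c' s₀ = 0 ∧
      ∑ s ∈ S.erase s₀, c' s • s = ∑ s ∈ S, c s • s := by
  classical
  obtain ⟨s₁, hs₁, hgs₁⟩ := hpos
  have hPne : (S.filter (fun s => 0 < g s)).Nonempty :=
    ⟨s₁, Finset.mem_filter.2 ⟨hs₁, hgs₁⟩⟩
  obtain ⟨s₀, hs₀P, hmin⟩ := Finset.exists_min_image _ (fun s => c s / g s) hPne
  obtain ⟨hs₀S, hgs₀⟩ := Finset.mem_filter.1 hs₀P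
  set lam := c s₀ / g s₀ with hlam
  have hlam0 : 0 ≤ lam := div_nonneg (hc s₀ hs₀S) hgs₀.le
  refine ⟨s₀, hs₀S, fun s => c s - lam * g s, ?_, ?_, ?_⟩
  · intro s hs
    show 0 ≤ c s - lam * g s
    by_cases hgs : 0 < g s
    · have := hmin s (Finset.mem_filter.2 ⟨hs, hgs⟩)
      rw [hlam] at *
      have : lam * g s ≤ c s := by
        rw [div_le_div_iff₀ hgs₀ hgs] at this
        calc lam * g s = c s₀ / g s₀ * g s := rfl
          _ ≤ c s := by
            rw [div_mul_eq_mul_div, div_le_iff₀ hgs₀]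
            linarith [this]
      linarith
    · push_neg at hgs
      have : lam * g s ≤ 0 := mul_nonpos_of_nonneg_of_nonpos hlam0 hgs
      have := hc s hs
      linarith
  · show c s₀ - lam * g s₀ = 0
    rw [hlam, div_mul_cancel₀ _ hgs₀.ne', sub_self]
  · rw [Finset.sum_erase S (f := fun s => (c s - lam * g s) • s)
      (by have : c s₀ - lam * g s₀ = 0 := by rw [hlam, div_mul_cancel₀ _ hgs₀.ne', sub_self]
          simp [this])]
    have : ∑ s ∈ S, (c s - lam * g s) • s
        = ∑ s ∈ S, c s • s - lam • ∑ s ∈ S, g s • s := by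
      rw [Finset.smul_sum, ← Finset.sum_sub_distrib]
      congr 1; ext s
      rw [sub_smul, smul_smul]
    rw [this, hg, smul_zero, sub_zero]

/-- Carathéodory for cones: a nonnegative combination can be rewritten as a nonnegative
combination over a linearly independent subset. -/
lemma cone_caratheodory {E : Type*} [AddCommGroup E] [Module ℝ E] [DecidableEq E]
    (S : Finset E) (c : E → ℝ) (hc : ∀ s ∈ S, 0 ≤ c s) :
    ∃ T ⊆ S, LinearIndependent ℝ (fun t : T => (t : E)) ∧
      ∃ b : E → ℝ, (∀ t ∈ T, 0 ≤ b t) ∧ ∑ t ∈ T, b t • t = ∑ s ∈ S, c s • s := by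
  classical
  induction S using Finset.strongInductionOn generalizing c with
  | _ S ih =>
  by_cases hind : LinearIndependent ℝ (fun t : S => (t : E))
  · exact ⟨S, subset_rfl, hind, c, hc, rfl⟩
  · rw [Fintype.not_linearIndependent_iff] at hind
    obtain ⟨g, hgsum, i₀, hgi₀⟩ := hind
    set gg : E → ℝ := fun e => if h : e ∈ S then g ⟨e, h⟩ else 0 with hgg
    have hggsum : ∑ s ∈ S, gg s • s = 0 := by
      rw [← hgsum, ← Finset.sum_attach S (fun s => gg s • s)]
      apply Finset.sum_congr rfl
      intro t _
      simp [hgg, t.2]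
    have key : ∀ h : E → ℝ, (∑ s ∈ S, h s • s = 0) → (∃ s ∈ S, 0 < h s) →
        ∃ T ⊆ S, LinearIndependent ℝ (fun t : T => (t : E)) ∧
          ∃ b : E → ℝ, (∀ t ∈ T, 0 ≤ b t) ∧ ∑ t ∈ T, b t • t = ∑ s ∈ S, c s • s := by
      intro h hsum hpos
      obtain ⟨s₀, hs₀, c', hc'₀, _, hc'sum⟩ := cone_reduce S c h hc hsum hpos
      obtain ⟨T, hTsub, hTind, b, hb, hbsum⟩ :=
        ih (S.erase s₀) (Finset.erase_ssubset hs₀) c' (fun s hs => hc'₀ s (Finset.mem_of_mem_erase hs))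
      exact ⟨T, hTsub.trans (Finset.erase_subset _ _), hTind, b, hb, by rw [hbsum, hc'sum]⟩
    rcases lt_trichotomy (gg i₀.1) 0 with hneg | hzero | hpos
    · refine key (fun e => -gg e) ?_ ⟨i₀, i₀.2, by show 0 < -gg i₀.1; linarith⟩
      simp only [neg_smul, Finset.sum_neg_distrib, hggsum, neg_zero]
    · exact absurd hzero (by simp [hgg, i₀.2, hgi₀])
    · exact key gg hggsum ⟨i₀, i₀.2, hpos⟩

/-- The cone generated by a finite set in a finite-dimensional space is closed. -/
lemma isClosed_coneGen {E : Type*} [NormedAddCommGroup E] [NormedSpace ℝ E]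
    [FiniteDimensional ℝ E] [DecidableEq E] (S : Finset E) :
    IsClosed {x : E | ∃ c : E → ℝ, (∀ s ∈ S, 0 ≤ c s) ∧ ∑ s ∈ S, c s • s = x} := by
  classical
  -- the cone over a linearly independent finset is closed
  have hclosed : ∀ T : Finset E, LinearIndependent ℝ (fun t : T => (t : E)) →
      IsClosed {x : E | ∃ c : E → ℝ, (∀ t ∈ T, 0 ≤ c t) ∧ ∑ t ∈ T, c t • t = x} := by
    intro T hT
    let f : (T → ℝ) →ₗ[ℝ] E :=
      { toFun := fun cc => ∑ t : T, cc t • (t : E)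
        map_add' := by intro a b; simp [add_smul, Finset.sum_add_distrib]
        map_smul' := by intro r a; simp [smul_smul, Finset.smul_sum] }
    have hker : LinearMap.ker f = ⊥ := by
      rw [LinearMap.ker_eq_bot]
      intro a b hab
      have h0 : ∑ t : T, (a t - b t) • (t : E) = 0 := by
        simp only [sub_smul, Finset.sum_sub_distrib]
        show f a - f b = 0
        rw [hab, sub_self]
      have := Fintype.linearIndependent_iff.1 hT (fun t => a t - b t) h0
      funext t
      have h : a t - b t = 0 := this t
      linarith
    have hemb := LinearMap.isClosedEmbedding_of_injective (f := f) hker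
    have himage : {x : E | ∃ c : E → ℝ, (∀ t ∈ T, 0 ≤ c t) ∧ ∑ t ∈ T, c t • t = x}
        = f '' {cc : T → ℝ | ∀ t, 0 ≤ cc t} := by
      ext x
      constructor
      · rintro ⟨c, hc, hsum⟩
        refine ⟨fun t => c t, fun t => hc t t.2, ?_⟩
        show ∑ t : T, c (t : E) • (t : E) = x
        rwa [Finset.sum_coe_sort T (fun t => c t • t)]
      · rintro ⟨cc, hcc, hsum⟩
        refine ⟨fun e => if h : e ∈ T then cc ⟨e, h⟩ else 0, ?_, ?_⟩
        · intro t ht; simp only [ht, dif_pos]; exact hcc _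
        · rw [← Finset.sum_attach T]
          rw [← hsum]
          apply Finset.sum_congr rfl
          intro t _
          simp [t.2]
      
    rw [himage]
    apply hemb.isClosedMap
    have : {cc : T → ℝ | ∀ t, 0 ≤ cc t} = ⋂ t : T, {cc : T → ℝ | 0 ≤ cc t} := by
      ext cc; simp
    rw [this]
    exact isClosed_iInter fun t => isClosed_le continuous_const (continuous_apply t)
  -- decompose the cone as a finite union over independent subsets
  have hdecomp : {x : E | ∃ c : E → ℝ, (∀ s ∈ S, 0 ≤ c s) ∧ ∑ s ∈ S, c s • s = x}
      = ⋃ T ∈ {T : Finset E | T ⊆ S ∧ LinearIndependent ℝ (fun t : T => (t : E))},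
          {x : E | ∃ c : E → ℝ, (∀ t ∈ T, 0 ≤ c t) ∧ ∑ t ∈ T, c t • t = x} := by
    ext x
    simp only [Set.mem_iUnion, Set.mem_setOf_eq, exists_prop]
    constructor
    · rintro ⟨c, hc, hsum⟩
      obtain ⟨T, hTS, hTind, b, hb, hbsum⟩ := cone_caratheodory S c hc
      exact ⟨T, ⟨hTS, hTind⟩, b, hb, by rw [hbsum, hsum]⟩
    · rintro ⟨T, ⟨hTS, _⟩, c, hc, hsum⟩
      refine ⟨fun e => if e ∈ T then c e else 0, ?_, ?_⟩
      · intro s hs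
        by_cases h : s ∈ T
        · simpa [h] using hc s h
        · simp [h]
      · rw [← hsum, ← Finset.sum_subset hTS (fun e _ he => by simp [he])]
        apply Finset.sum_congr rfl
        intro t ht
        simp [ht]
  rw [hdecomp]
  apply Set.Finite.isClosed_biUnion
  · exact (S.powerset.finite_toSet).subset (fun T hT => Finset.mem_coe.2 (Finset.mem_powerset.2 hT.1))
  · rintro T ⟨-, hTind⟩
    exact hclosed T hTind



/-- `iota` as an additive monoid homomorphism. -/
def iotaHom (d : ℕ) : (ℕ × (Fin d → ℤ)) →+ (ℝ × (Fin d → ℝ)) where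
  toFun := iota d
  map_zero' := by simp [iota]; rfl
  map_add' := by
    intro a b
    simp only [iota, Prod.fst_add, Prod.snd_add, Nat.cast_add, Pi.add_apply, Int.cast_add]
    rfl

lemma iota_injective (d : ℕ) : Function.Injective (iota d) := by
  intro a b hab
  have h1 : ((a.1 : ℝ)) = (b.1 : ℝ) := congrArg Prod.fst hab
  have h2 : (fun i => (a.2 i : ℝ)) = fun i => (b.2 i : ℝ) := congrArg Prod.snd hab
  have : a.1 = b.1 := Nat.cast_injective h1
  have h2' : a.2 = b.2 := by
    funext i
    exact Int.cast_injective (congrFun h2 i)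
  exact Prod.ext this h2'

section main
variable {d : ℕ} (Γ : AddSubmonoid (ℕ × (Fin d → ℤ))) (S : Finset (ℕ × (Fin d → ℤ)))

/-- The finitely generated cone associated to a finset of `ℝ × ℝ^d`. -/
def FinCone (S' : Finset (ℝ × (Fin d → ℝ))) : Set (ℝ × (Fin d → ℝ)) :=
  {x | ∃ c : (ℝ × (Fin d → ℝ)) → ℝ, (∀ s ∈ S', 0 ≤ c s) ∧ ∑ s ∈ S', c s • s = x}

lemma FinCone.smul_mem {S' : Finset (ℝ × (Fin d → ℝ))} {a : ℝ} (ha : 0 ≤ a)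
    {x : ℝ × (Fin d → ℝ)} (hx : x ∈ FinCone S') : a • x ∈ FinCone S' := by
  obtain ⟨c, hc, hsum⟩ := hx
  exact ⟨fun s => a * c s, fun s hs => mul_nonneg ha (hc s hs), by
    rw [← hsum, Finset.smul_sum]; exact Finset.sum_congr rfl fun s _ => (smul_smul a (c s) s).symm⟩

lemma FinCone.add_mem {S' : Finset (ℝ × (Fin d → ℝ))} {x y : ℝ × (Fin d → ℝ)}
    (hx : x ∈ FinCone S') (hy : y ∈ FinCone S') : x + y ∈ FinCone S' := by
  obtain ⟨c, hc, hcs⟩ := hx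
  obtain ⟨e, he, hes⟩ := hy
  exact ⟨fun s => c s + e s, fun s hs => add_nonneg (hc s hs) (he s hs), by
    rw [← hcs, ← hes, ← Finset.sum_add_distrib]
    exact Finset.sum_congr rfl fun s _ => add_smul (c s) (e s) s⟩

lemma FinCone.zero_mem (S' : Finset (ℝ × (Fin d → ℝ))) : 0 ∈ FinCone S' :=
  ⟨fun _ => 0, fun _ _ => le_refl 0, by simp⟩

lemma FinCone.gen_mem {S' : Finset (ℝ × (Fin d → ℝ))} {s : ℝ × (Fin d → ℝ)} (hs : s ∈ S') :
    s ∈ FinCone S' := by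
  classical
  refine ⟨fun e => if e = s then 1 else 0, fun e _ => by positivity, ?_⟩
  rw [Finset.sum_eq_single s (fun b _ hb => by simp [hb]) (fun h => absurd hs h)]
  simp

lemma FinCone.convex (S' : Finset (ℝ × (Fin d → ℝ))) : Convex ℝ (FinCone S') := by
  intro x hx y hy a b ha hb _
  exact FinCone.add_mem (FinCone.smul_mem ha hx) (FinCone.smul_mem hb hy)

lemma FinCone.isClosed (S' : Finset (ℝ × (Fin d → ℝ))) : IsClosed (FinCone S') := by
  classical
  exact isClosed_coneGen S'

/-- The cone of the image of `Γ` equals the finitely generated cone on the generators. -/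
lemma coneOf_eq_finCone (hS : AddSubmonoid.closure (S : Set _) = Γ) :
    coneOf (iota d '' (Γ : Set _)) = FinCone (S.image (iota d)) := by
  classical
  set S' := S.image (iota d) with hS'
  apply Set.Subset.antisymm
  · rintro z ⟨a, ha, y, hy, rfl⟩
    refine FinCone.smul_mem ha ?_
    have hsub : iota d '' (Γ : Set _) ⊆ FinCone S' := by
      rintro - ⟨γ, hγ, rfl⟩
      rw [← hS] at hγ
      induction hγ using AddSubmonoid.closure_induction with
      | mem s hs => exact FinCone.gen_mem (Finset.mem_image.2 ⟨s, hs, rfl⟩)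
      | zero =>
          rw [show iota d 0 = 0 from map_zero (iotaHom d)]
          exact FinCone.zero_mem S'
      | add a b _ _ hia hib =>
          rw [show iota d (a + b) = iota d a + iota d b from map_add (iotaHom d) a b]
          exact FinCone.add_mem hia hib
    exact convexHull_min hsub (FinCone.convex S') hy
  · rintro x ⟨c, hc, hsum⟩
    have hSΓ : ∀ s ∈ S', s ∈ iota d '' (Γ : Set _) := by
      intro s hs
      obtain ⟨p, hp, rfl⟩ := Finset.mem_image.1 hs
      exact ⟨p, by rw [← hS]; exact AddSubmonoid.subset_closure hp, rfl⟩
    by_cases hW : ∑ s ∈ S', c s = 0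
    · have hall : ∀ s ∈ S', c s = 0 := by
        intro s hs
        exact (Finset.sum_eq_zero_iff_of_nonneg hc).1 hW s hs
      have : x = 0 := by
        rw [← hsum]; exact Finset.sum_eq_zero fun s hs => by rw [hall s hs, zero_smul]
      refine ⟨0, le_refl 0, iota d 0, ?_, by rw [this, zero_smul]⟩
      exact subset_convexHull ℝ _ ⟨0, Γ.zero_mem, rfl⟩
    · have hWpos : 0 < ∑ s ∈ S', c s :=
        lt_of_le_of_ne (Finset.sum_nonneg hc) (Ne.symm hW)
      refine ⟨∑ s ∈ S', c s, hWpos.le, S'.centerMass c id, ?_, ?_⟩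
      · exact S'.centerMass_mem_convexHull hc hWpos hSΓ
      · rw [Finset.centerMass, smul_inv_smul₀ (ne_of_gt hWpos)]
        simp only [id_eq]
        exact hsum.symm
  
end main
section slice
variable {d : ℕ}

lemma finCone_slice_convex (S' : Finset (ℝ × (Fin d → ℝ))) :
    Convex ℝ {x : Fin d → ℝ | ((1:ℝ), x) ∈ FinCone S'} := by
  intro x hx y hy a b ha hb hab
  have : ((1:ℝ), a • x + b • y) = a • ((1:ℝ), x) + b • ((1:ℝ), y) := by
    apply Prod.ext
    · simpa using hab.symm
    · simp
  show ((1:ℝ), a • x + b • y) ∈ FinCone S'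
  rw [this]
  exact FinCone.add_mem (FinCone.smul_mem ha hx) (FinCone.smul_mem hb hy)

lemma finCone_slice_eq_convexHull [DecidableEq (ℝ × (Fin d → ℝ))]
    (S' : Finset (ℝ × (Fin d → ℝ)))
    (hzero : ∀ s ∈ S', s.1 = 0 → s = 0) (hpos : ∀ s ∈ S', 0 ≤ s.1) :
    {x : Fin d → ℝ | ((1:ℝ), x) ∈ FinCone S'} =
      convexHull ℝ (((S'.filter (fun t => t.1 ≠ 0)).image
        (fun t => t.1⁻¹ • t.2) : Finset (Fin d → ℝ)) : Set (Fin d → ℝ)) := by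
  classical
  set F := S'.filter (fun t => t.1 ≠ 0) with hF
  apply Set.Subset.antisymm
  · rintro x ⟨c, hc, hsum⟩
    have hsumF : ∑ t ∈ F, c t • t = ((1:ℝ), x) := by
      rw [← hsum, hF]
      apply Finset.sum_filter_of_ne
      intro t ht hne h10
      exact hne (by rw [hzero t ht h10, smul_zero])
    have hfst : ∑ t ∈ F, c t * t.1 = 1 := by
      have := congrArg Prod.fst hsumF
      rwa [Prod.fst_sum] at this
    have hsnd : ∑ t ∈ F, c t • t.2 = x := by
      have := congrArg Prod.snd hsumF
      rwa [Prod.snd_sum] at this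
    have hw : ∀ t ∈ F, 0 ≤ c t * t.1 := by
      intro t ht
      have htS : t ∈ S' := Finset.mem_filter.1 ht |>.1
      exact mul_nonneg (hc t htS) (hpos t htS)
    have hx : F.centerMass (fun t => c t * t.1) (fun t => t.1⁻¹ • t.2) = x := by
      rw [Finset.centerMass_eq_of_sum_1 _ _ hfst, ← hsnd]
      apply Finset.sum_congr rfl
      intro t ht
      have htne : t.1 ≠ 0 := (Finset.mem_filter.1 ht).2
      rw [smul_smul, mul_assoc, mul_inv_cancel₀ htne, mul_one]
    rw [← hx]
    apply Finset.centerMass_mem_convexHull F hw (by rw [hfst]; norm_num)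
    intro t ht
    exact Finset.mem_coe.2 (Finset.mem_image.2 ⟨t, ht, rfl⟩)
  · apply convexHull_min ?_ (finCone_slice_convex S')
    intro v hv
    obtain ⟨t, ht, rfl⟩ := Finset.mem_image.1 (Finset.mem_coe.1 hv)
    obtain ⟨htS, htne⟩ := Finset.mem_filter.1 ht
    have htpos : 0 < t.1 := lt_of_le_of_ne (hpos t htS) (Ne.symm htne)
    have : ((1:ℝ), t.1⁻¹ • t.2) = t.1⁻¹ • t := by
      apply Prod.ext
      · simp [inv_mul_cancel₀ htne]
      · rfl
    show ((1:ℝ), t.1⁻¹ • t.2) ∈ FinCone S'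
    rw [this]
    exact FinCone.smul_mem (inv_nonneg.2 htpos.le) (FinCone.gen_mem htS)

end slice
section rat
variable {d : ℕ}

/-- Cast map from the rational model to the real one. -/
def rho (d : ℕ) : ℚ × (Fin d → ℚ) → ℝ × (Fin d → ℝ) :=
  fun p => ((p.1 : ℝ), fun i => (p.2 i : ℝ))

lemma rho_add (a b : ℚ × (Fin d → ℚ)) : rho d (a + b) = rho d a + rho d b := by
  apply Prod.ext
  · simp [rho]
  · funext i; simp [rho]

lemma rho_smul (a : ℚ) (v : ℚ × (Fin d → ℚ)) : rho d (a • v) = (a : ℝ) • rho d v := by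
  apply Prod.ext
  · simp [rho]
  · funext i; simp [rho]

lemma rho_zero : rho d (0 : ℚ × (Fin d → ℚ)) = 0 := by
  apply Prod.ext <;> simp [rho] <;> rfl

/-- An explicit linear functional on `ℝ × ℝ^d`. -/
def dualFun (u : ℝ) (w : Fin d → ℝ) : (ℝ × (Fin d → ℝ)) →ₗ[ℝ] ℝ where
  toFun y := u * y.1 + ∑ i, w i * y.2 i
  map_add' a b := by
    simp only [Prod.fst_add, Prod.snd_add, Pi.add_apply]
    rw [show ∑ i, w i * (a.2 i + b.2 i) = ∑ i, (w i * a.2 i + w i * b.2 i) from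
      Finset.sum_congr rfl fun i _ => by ring, Finset.sum_add_distrib]
    ring
  map_smul' r a := by
    simp only [Prod.smul_fst, Prod.smul_snd, Pi.smul_apply, smul_eq_mul, RingHom.id_apply]
    rw [show ∑ i, w i * (r * a.2 i) = ∑ i, r * (w i * a.2 i) from
      Finset.sum_congr rfl fun i _ => by ring, ← Finset.mul_sum]
    ring

/-- Basis vectors of the rational model. -/
def e0 (d : ℕ) : ℚ × (Fin d → ℚ) := (1, 0)
def eI (d : ℕ) (i : Fin d) : ℚ × (Fin d → ℚ) := (0, Pi.single i 1)

/-- Compatibility of `dualFun` built from a rational functional with casting. -/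
lemma dualFun_rho (f : (ℚ × (Fin d → ℚ)) →ₗ[ℚ] ℚ) (v : ℚ × (Fin d → ℚ)) :
    dualFun ((f (e0 d) : ℚ) : ℝ)
      (fun i => ((f (eI d i) : ℚ) : ℝ)) (rho d v) = ((f v : ℚ) : ℝ) := by
  have hdecomp : v = v.1 • e0 d + ∑ i, v.2 i • eI d i := by
    apply Prod.ext
    · simp [e0, eI, Prod.fst_sum]
    · funext j
      simp [e0, eI, Prod.snd_sum, Finset.sum_apply, Pi.single_apply]
  have hfv : f v = v.1 * f (e0 d) + ∑ i, v.2 i * f (eI d i) := by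
    conv_lhs => rw [hdecomp]
    rw [map_add, map_smul, map_sum]
    simp [smul_eq_mul]
  rw [hfv]
  push_cast
  show (f (e0 d) : ℝ) * ((v.1 : ℚ) : ℝ) + ∑ i, ((f (eI d i) : ℚ) : ℝ) * ((v.2 i : ℚ) : ℝ)
      = ((v.1 : ℚ) : ℝ) * ((f (e0 d) : ℚ) : ℝ) + ∑ i, ((v.2 i : ℚ) : ℝ) * ((f (eI d i) : ℚ) : ℝ)
  rw [Finset.sum_congr rfl fun i _ => mul_comm (((f (eI d i) : ℚ) : ℝ)) (((v.2 i : ℚ) : ℝ)),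
    mul_comm]
end rat
section rat2
variable {d : ℕ}

/-- `rho` as an additive monoid homomorphism. -/
def rhoHom (d : ℕ) : (ℚ × (Fin d → ℚ)) →+ (ℝ × (Fin d → ℝ)) where
  toFun := rho d
  map_zero' := rho_zero
  map_add' := rho_add

/-- Coefficients in an independent representation of a rational point over rational
vectors are rational. -/
lemma coeffs_rational (T : Finset (ℝ × (Fin d → ℝ))) (T' : Finset (ℚ × (Fin d → ℚ)))
    (hTT' : T'.image (rho d) = T)
    (hind : LinearIndependent ℝ (fun t : T => (t : ℝ × (Fin d → ℝ))))
    (b : (ℝ × (Fin d → ℝ)) → ℝ) (bQ : ℚ × (Fin d → ℚ))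
    (hbsum : ∑ t ∈ T, b t • t = rho d bQ) :
    ∀ t ∈ T, ∃ r : ℚ, (r : ℝ) = b t := by
  classical
  -- Step 1: bQ is in the rational span of T'
  have hspan : bQ ∈ Submodule.span ℚ (T' : Set (ℚ × (Fin d → ℚ))) := by
    by_contra hnot
    obtain ⟨f, hfb, hmap⟩ := Submodule.exists_dual_map_eq_bot_of_notMem hnot inferInstance
    have hf0 : ∀ t' ∈ T', f t' = 0 := by
      intro t' ht'
      have : f t' ∈ (Submodule.span ℚ (T' : Set _)).map f :=
        Submodule.mem_map_of_mem (Submodule.subset_span ht')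
      rwa [hmap, Submodule.mem_bot] at this
    set ψ := dualFun ((f (e0 d) : ℚ) : ℝ) (fun i => ((f (eI d i) : ℚ) : ℝ)) with hψ
    have h2 : ψ (∑ t ∈ T, b t • t) = 0 := by
      rw [map_sum]
      apply Finset.sum_eq_zero
      intro t ht
      rw [← hTT'] at ht
      obtain ⟨t', ht', rfl⟩ := Finset.mem_image.1 ht
      rw [map_smul, smul_eq_mul, hψ, dualFun_rho f t', hf0 t' ht', Rat.cast_zero, mul_zero]
    rw [hbsum, hψ, dualFun_rho f bQ] at h2
    exact hfb (by exact_mod_cast h2)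
  obtain ⟨q, -, hq⟩ := Submodule.mem_span_finset.1 hspan
  -- Step 2: collapse the rational coefficients along `rho`
  set qE : (ℝ × (Fin d → ℝ)) → ℚ :=
    fun e => ∑ t' ∈ T'.filter (fun t' => rho d t' = e), q t' with hqE
  have hmaps : ∀ t' ∈ T', rho d t' ∈ T := by
    intro t' ht'
    rw [← hTT']
    exact Finset.mem_image_of_mem _ ht'
  have hcast : ∑ t ∈ T, ((qE t : ℝ)) • t = rho d bQ := by
    have h1 : rho d (∑ t' ∈ T', q t' • t') = ∑ t' ∈ T', (q t' : ℝ) • rho d t' := by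
      rw [show rho d (∑ t' ∈ T', q t' • t') = rhoHom d (∑ t' ∈ T', q t' • t') from rfl,
        map_sum]
      exact Finset.sum_congr rfl fun t' _ => rho_smul (q t') t'
    rw [← hq, h1, ← Finset.sum_fiberwise_of_maps_to hmaps (fun t' => (q t' : ℝ) • rho d t')]
    apply Finset.sum_congr rfl
    intro t _
    have : ∀ t' ∈ T'.filter (fun t' => rho d t' = t), (q t' : ℝ) • rho d t' = (q t' : ℝ) • t := by
      intro t' ht'
      rw [(Finset.mem_filter.1 ht').2]
    rw [Finset.sum_congr rfl this, ← Finset.sum_smul, hqE]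
    push_cast
    rfl
  -- Step 3: linear independence forces the real coefficients to be the rational ones
  have hdiff : ∑ t ∈ T, (b t - (qE t : ℝ)) • t = 0 := by
    have : ∀ t ∈ T, (b t - (qE t : ℝ)) • t = b t • t - (qE t : ℝ) • t :=
      fun t _ => sub_smul _ _ _
    rw [Finset.sum_congr rfl this, Finset.sum_sub_distrib, hbsum, hcast, sub_self]
  have hg : ∑ t : T, (b (t : ℝ × (Fin d → ℝ)) - (qE (t : ℝ × (Fin d → ℝ)) : ℝ)) • (t : ℝ × (Fin d → ℝ)) = 0 := by
    rw [Finset.sum_coe_sort T (fun t => (b t - (qE t : ℝ)) • t)]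
    exact hdiff
  have := Fintype.linearIndependent_iff.1 hind
    (fun t => b (t : ℝ × (Fin d → ℝ)) - (qE (t : ℝ × (Fin d → ℝ)) : ℝ)) hg
  intro t ht
  have h0 : b t - (qE t : ℝ) = 0 := this ⟨t, ht⟩
  exact ⟨qE t, by linarith⟩
end rat2
section lattice
variable {d : ℕ}

/-- The embedding `ℕ × ℤ^d → ℚ × ℚ^d`. -/
def iotaQ (d : ℕ) : ℕ × (Fin d → ℤ) → ℚ × (Fin d → ℚ) :=
  fun p => ((p.1 : ℚ), fun i => (p.2 i : ℚ))

lemma rho_iotaQ (p : ℕ × (Fin d → ℤ)) : rho d (iotaQ d p) = iota d p := by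
  apply Prod.ext
  · simp [rho, iotaQ, iota]
  · funext i; simp [rho, iotaQ, iota]

lemma iota_nsmul (n : ℕ) (p : ℕ × (Fin d → ℤ)) :
    iota d (n • p) = (n : ℝ) • iota d p := by
  rw [show iota d (n • p) = iotaHom d (n • p) from rfl, map_nsmul,
    Nat.cast_smul_eq_nsmul]
  rfl

lemma lattice_point_mem (Γ : AddSubmonoid (ℕ × (Fin d → ℤ)))
    (S : Finset (ℕ × (Fin d → ℤ))) (hS : AddSubmonoid.closure (S : Set _) = Γ)
    (hsat : ∀ (m : ℕ) (x : ℕ × (Fin d → ℤ)), 0 < m → m • x ∈ Γ → x ∈ Γ)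
    (x : Fin d → ℤ)
    (hx : ((1:ℝ), fun i => (x i : ℝ)) ∈ FinCone (S.image (iota d))) :
    ((1:ℕ), x) ∈ Γ := by
  classical
  obtain ⟨c, hc, hsum⟩ := hx
  obtain ⟨T, hTS', hind, b, hb, hbsum⟩ := cone_caratheodory (S.image (iota d)) c hc
  rw [hsum] at hbsum
  set bQ : ℚ × (Fin d → ℚ) := iotaQ d ((1:ℕ), x) with hbQ
  have hbQcast : rho d bQ = ((1:ℝ), fun i => (x i : ℝ)) := by
    rw [hbQ, rho_iotaQ]
    apply Prod.ext
    · simp [iota]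
    · funext i; simp [iota]
  set T' : Finset (ℚ × (Fin d → ℚ)) :=
    (S.filter (fun s => iota d s ∈ T)).image (iotaQ d) with hT'
  have hTT' : T'.image (rho d) = T := by
    apply Finset.Subset.antisymm
    · intro t ht
      obtain ⟨t', ht', rfl⟩ := Finset.mem_image.1 ht
      obtain ⟨s, hs, rfl⟩ := Finset.mem_image.1 ht'
      rw [rho_iotaQ]
      exact (Finset.mem_filter.1 hs).2
    · intro t ht
      obtain ⟨s, hs, rfl⟩ := Finset.mem_image.1 (hTS' ht)
      refine Finset.mem_image.2 ⟨iotaQ d s, Finset.mem_image.2 ⟨s, ?_, rfl⟩, rho_iotaQ s⟩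
      exact Finset.mem_filter.2 ⟨hs, by rwa [← Finset.mem_image.1 (hTS' ht) |>.2.2] at ht⟩
  have hrat := coeffs_rational T T' hTT' hind b bQ (by rw [hbQcast]; exact hbsum)
  -- choose rational values and preimage generators
  set qq : (ℝ × (Fin d → ℝ)) → ℚ :=
    fun t => if h : t ∈ T then Classical.choose (hrat t h) else 0 with hqq
  have hqqb : ∀ t ∈ T, ((qq t : ℝ)) = b t := by
    intro t ht
    simp only [hqq, dif_pos ht]
    exact Classical.choose_spec (hrat t ht)
  have hqq0 : ∀ t ∈ T, 0 ≤ qq t := by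
    intro t ht
    have : (0:ℝ) ≤ (qq t : ℝ) := by rw [hqqb t ht]; exact hb t ht
    exact_mod_cast this
  have hsel : ∀ t ∈ T, ∃ s, s ∈ S ∧ iota d s = t := by
    intro t ht
    obtain ⟨s, hs, rfl⟩ := Finset.mem_image.1 (hTS' ht)
    exact ⟨s, hs, rfl⟩
  set sel : (ℝ × (Fin d → ℝ)) → ℕ × (Fin d → ℤ) :=
    fun t => if h : t ∈ T then Classical.choose (hsel t h) else 0 with hselq
  have hselS : ∀ t ∈ T, sel t ∈ S ∧ iota d (sel t) = t := by
    intro t ht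
    simp only [hselq, dif_pos ht]
    exact Classical.choose_spec (hsel t ht)
  -- clear denominators
  set m : ℕ := ∏ t ∈ T, (qq t).den with hm
  have hmpos : 0 < m := Finset.prod_pos fun t _ => (qq t).pos
  have hnn : ∀ t ∈ T, ∃ n : ℕ, (n : ℚ) = qq t * m := by
    intro t ht
    have hdvd : ((qq t).den : ℤ) ∣ (m : ℤ) := by
      exact_mod_cast Int.natCast_dvd_natCast.2 (Finset.dvd_prod_of_mem (fun t => (qq t).den) ht)
    obtain ⟨k, hk⟩ := hdvd
    have hk0 : 0 ≤ k := by
      have hd : (0:ℤ) < ((qq t).den : ℤ) := by exact_mod_cast (qq t).pos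
      nlinarith [hk, Int.natCast_nonneg m]
    have hnum0 : 0 ≤ (qq t).num := Rat.num_nonneg.2 (hqq0 t ht)
    refine ⟨((qq t).num * k).toNat, ?_⟩
    have htn : (((qq t).num * k).toNat : ℤ) = (qq t).num * k :=
      Int.toNat_of_nonneg (mul_nonneg hnum0 hk0)
    have hden0 : ((qq t).den : ℚ) ≠ 0 := Nat.cast_ne_zero.2 (qq t).den_nz
    have hnumq : ((qq t).num : ℚ) = qq t * ((qq t).den : ℚ) :=
      (div_eq_iff hden0).1 (Rat.num_div_den (qq t))
    have hmk : (m:ℚ) = ((qq t).den : ℚ) * (k:ℚ) := by exact_mod_cast hk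
    have hfin : ((((qq t).num * k).toNat : ℕ) : ℚ) = ((qq t).num : ℚ) * (k : ℚ) := by
      rw [show ((((qq t).num * k).toNat : ℕ) : ℚ) = ((((qq t).num * k).toNat : ℤ) : ℚ) by
        push_cast; ring, htn]
      push_cast; ring
    rw [hfin, hnumq, hmk]
    ring
  set nn : (ℝ × (Fin d → ℝ)) → ℕ :=
    fun t => if h : t ∈ T then Classical.choose (hnn t h) else 0 with hnnq
  have hnnval : ∀ t ∈ T, ((nn t : ℚ)) = qq t * m := by
    intro t ht
    simp only [hnnq, dif_pos ht]
    exact Classical.choose_spec (hnn t ht)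
  -- the integral combination
  have hmemΓ : ∑ t ∈ T, nn t • sel t ∈ Γ := by
    apply AddSubmonoid.sum_mem
    intro t ht
    exact AddSubmonoid.nsmul_mem Γ (by rw [← hS]; exact AddSubmonoid.subset_closure (hselS t ht).1) _
  have hkey : ∑ t ∈ T, nn t • sel t = m • ((1:ℕ), x) := by
    apply iota_injective
    rw [show iota d (∑ t ∈ T, nn t • sel t) = iotaHom d (∑ t ∈ T, nn t • sel t) from rfl,
      map_sum, iota_nsmul]
    have hterm : ∀ t ∈ T, iotaHom d (nn t • sel t) = (b t * m) • t := by
      intro t ht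
      rw [show iotaHom d (nn t • sel t) = iota d (nn t • sel t) from rfl, iota_nsmul,
        (hselS t ht).2]
      congr 1
      have h2 : (((nn t : ℕ) : ℚ) : ℝ) = ((qq t * (m:ℚ) : ℚ) : ℝ) := by
        rw [hnnval t ht]
      push_cast at h2
      rw [h2, hqqb t ht]
    rw [Finset.sum_congr rfl hterm]
    have : ∑ t ∈ T, (b t * m) • t = (m : ℝ) • ∑ t ∈ T, b t • t := by
      rw [Finset.smul_sum]
      apply Finset.sum_congr rfl
      intro t _
      rw [smul_smul, mul_comm]
    rw [this, hbsum]
    apply Prod.ext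
    · simp [iota]
    · funext i; simp [iota]
  rw [hkey] at hmemΓ
  exact hsat m _ hmpos hmemΓ
end lattice

/-- If `Γ ⊆ ℕ × ℤ^d` is a finitely generated saturated monoid whose real cone is
full-dimensional and whose slice at height `1` is bounded, then
`Δ = {x : (1,x) ∈ closure(cone Γ)}` is a rational convex polytope whose lattice points
are exactly the degree-one elements of `Γ`. -/
theorem stmt19 {d : ℕ} (Γ : AddSubmonoid (ℕ × (Fin d → ℤ)))
    (hfg : ∃ S : Finset (ℕ × (Fin d → ℤ)), AddSubmonoid.closure (S : Set _) = Γ)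
    (hsat : ∀ (m : ℕ) (x : ℕ × (Fin d → ℤ)), 0 < m → m • x ∈ Γ → x ∈ Γ)
    (hfull : Submodule.span ℝ (iota d '' (Γ : Set _)) = ⊤)
    (Δ : Set (Fin d → ℝ))
    (hΔ : Δ = {x | ((1 : ℝ), x) ∈ closure (coneOf (iota d '' (Γ : Set _)))})
    (hbdd : Bornology.IsBounded Δ) :
    (∃ V : Finset (Fin d → ℝ),
        (∀ v ∈ V, ∀ i, ∃ q : ℚ, v i = (q : ℝ)) ∧ Δ = convexHull ℝ (V : Set _)) ∧
    (∀ x : Fin d → ℤ, ((fun i => (x i : ℝ)) ∈ Δ ↔ ((1 : ℕ), x) ∈ Γ)) := by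
  classical
  obtain ⟨S, hS⟩ := hfg
  set S' : Finset (ℝ × (Fin d → ℝ)) := S.image (iota d) with hS'
  have hcone : coneOf (iota d '' (Γ : Set _)) = FinCone S' := coneOf_eq_finCone Γ S hS
  have hclosedC : IsClosed (FinCone S') := FinCone.isClosed S'
  have hΔ' : Δ = {x | ((1:ℝ), x) ∈ FinCone S'} := by
    rw [hΔ, hcone, hclosedC.closure_eq]
  have hΓC : ∀ γ ∈ Γ, iota d γ ∈ FinCone S' := by
    intro γ hγ
    rw [← hcone]
    exact ⟨1, zero_le_one, iota d γ,
      subset_convexHull ℝ _ ⟨γ, hγ, rfl⟩, (one_smul ℝ _).symm⟩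
  have hpos : ∀ s ∈ S', 0 ≤ s.1 := by
    intro s hs
    obtain ⟨p, _, rfl⟩ := Finset.mem_image.1 hs
    exact Nat.cast_nonneg p.1
  -- no nonzero generators at height zero, via boundedness
  have hzero : ∀ s ∈ S', s.1 = 0 → s = 0 := by
    by_contra hcon
    push_neg at hcon
    obtain ⟨t, htS, ht0, htne⟩ := hcon
    have ht2 : t.2 ≠ 0 := by
      intro h
      exact htne (Prod.ext ht0 h)
    have hγex : ∃ γ ∈ Γ, γ.1 ≠ 0 := by
      by_contra hno
      push_neg at hno
      have hsub : iota d '' (Γ : Set _)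
          ⊆ (LinearMap.ker (LinearMap.fst ℝ ℝ (Fin d → ℝ)) : Set _) := by
        rintro - ⟨γ, hγ, rfl⟩
        simp [LinearMap.mem_ker, iota, hno γ hγ]
      have hle := Submodule.span_le.2 hsub
      rw [hfull] at hle
      have h1 : ((1:ℝ), (0 : Fin d → ℝ)) ∈ LinearMap.ker (LinearMap.fst ℝ ℝ (Fin d → ℝ)) :=
        hle trivial
      simp [LinearMap.mem_ker] at h1
    obtain ⟨γ, hγ, hγ1⟩ := hγex
    have hγpos : (0:ℝ) < (γ.1:ℝ) := by exact_mod_cast Nat.pos_of_ne_zero hγ1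
    set x₀ : Fin d → ℝ := (γ.1:ℝ)⁻¹ • (fun i => (γ.2 i : ℝ)) with hx₀
    have hx₀Δ : ((1:ℝ), x₀) ∈ FinCone S' := by
      have h1 : iota d γ ∈ FinCone S' := hΓC γ hγ
      have h2 : ((1:ℝ), x₀) = (γ.1:ℝ)⁻¹ • iota d γ := by
        apply Prod.ext
        · simp [iota, inv_mul_cancel₀ hγpos.ne']
        · rfl
      rw [h2]
      exact FinCone.smul_mem (inv_nonneg.2 hγpos.le) h1
    have hn : ∀ n : ℕ, x₀ + (n:ℝ) • t.2 ∈ Δ := by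
      intro n
      rw [hΔ']
      have htC : t ∈ FinCone S' := FinCone.gen_mem htS
      have heq : ((1:ℝ), x₀ + (n:ℝ) • t.2) = ((1:ℝ), x₀) + (n:ℝ) • t := by
        apply Prod.ext
        · simp [ht0]
        · rfl
      show ((1:ℝ), x₀ + (n:ℝ) • t.2) ∈ FinCone S'
      rw [heq]
      exact FinCone.add_mem hx₀Δ (FinCone.smul_mem (Nat.cast_nonneg n) htC)
    obtain ⟨R, hR⟩ := isBounded_iff_forall_norm_le.1 hbdd
    have htn : 0 < ‖t.2‖ := norm_pos_iff.2 ht2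
    obtain ⟨n, hnlt⟩ := exists_nat_gt ((R + ‖x₀‖) / ‖t.2‖)
    have h1 : R + ‖x₀‖ < (n:ℝ) * ‖t.2‖ := by
      rw [div_lt_iff₀ htn] at hnlt
      linarith
    have h2 := hR _ (hn n)
    have h3 : ‖(n:ℝ) • t.2‖ ≤ ‖x₀ + (n:ℝ) • t.2‖ + ‖x₀‖ := by
      calc ‖(n:ℝ) • t.2‖ = ‖(x₀ + (n:ℝ) • t.2) - x₀‖ := by rw [add_sub_cancel_left]
        _ ≤ ‖x₀ + (n:ℝ) • t.2‖ + ‖x₀‖ := norm_sub_le _ _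
    rw [norm_smul, Real.norm_natCast] at h3
    linarith
  constructor
  · refine ⟨(S'.filter (fun t => t.1 ≠ 0)).image (fun t => t.1⁻¹ • t.2), ?_, ?_⟩
    · intro v hv i
      obtain ⟨t, ht, rfl⟩ := Finset.mem_image.1 hv
      obtain ⟨htS', htne⟩ := Finset.mem_filter.1 ht
      obtain ⟨p, _, rfl⟩ := Finset.mem_image.1 htS'
      refine ⟨(p.2 i : ℚ) / ((p.1 : ℕ) : ℚ), ?_⟩
      show ((iota d p).1⁻¹ • (iota d p).2) i = _
      have : ((iota d p).1⁻¹ • (iota d p).2) i = (p.2 i : ℝ) / ((p.1 : ℕ) : ℝ) := by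
        simp [iota, Pi.smul_apply, div_eq_inv_mul]
      rw [this]
      push_cast
      ring
    · rw [hΔ']
      exact finCone_slice_eq_convexHull S' hzero hpos
  · intro x
    constructor
    · intro hx
      rw [hΔ'] at hx
      exact lattice_point_mem Γ S hS hsat x hx
    · intro hx
      rw [hΔ']
      have h1 : iota d ((1:ℕ), x) ∈ FinCone S' := hΓC _ hx
      have h2 : iota d ((1:ℕ), x) = ((1:ℝ), fun i => (x i : ℝ)) := by
        apply Prod.ext
        · simp [iota]
        · rfl
      show ((1:ℝ), fun i => (x i : ℝ)) ∈ FinCone S'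
      rw [← h2]
      exact h1
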